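/- Under the same assumptions (‖∇z_{i,c}(θ)‖_∞ ≤ G and second-order partials of each z_{i,c} bounded by M), every second-order partial derivative of L_BE(θ) = -log softmax((1/|B|)∑_{i∈B} z_i(θ))_ŷ is bounded in absolute value by 2(M + G²). -/

import Mathlib

noncomputable def softmax {C : ℕ} (z : Fin C → ℝ) (c : Fin C) : ℝ :=
  Real.exp (z c) / ∑ j, Real.exp (z j)

/-- The bundle cross-entropy loss as a function of the model parameter θ. -/
noncomputable def LBE {ι : Type*} {C nd : ℕ} (B : Finset ι)
    (z : ι → Fin C → (Fin nd → ℝ) → ℝ) (yh : Fin C) (θ : Fin nd → ℝ) : ℝ :=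
  -Real.log (softmax (fun c => (B.card : ℝ)⁻¹ * ∑ i ∈ B, z i c θ) yh)

open Finset

lemma hasDerivAt_line {nd : ℕ} {f : (Fin nd → ℝ) → ℝ} (hf : Differentiable ℝ f)
    (a v : Fin nd → ℝ) (t₀ : ℝ) :
    HasDerivAt (fun t => f (a + t • v)) (fderiv ℝ f (a + t₀ • v) v) t₀ := by
  have h1 : HasDerivAt (fun t : ℝ => a + t • v) v t₀ := by
    simpa using ((hasDerivAt_id t₀).smul_const v).const_add a
  exact (hf (a + t₀ • v)).hasFDerivAt.comp_hasDerivAt t₀ h1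

lemma hasDerivAt_line0 {nd : ℕ} {f : (Fin nd → ℝ) → ℝ} (hf : Differentiable ℝ f)
    (a v : Fin nd → ℝ) :
    HasDerivAt (fun t => f (a + t • v)) (fderiv ℝ f a v) (0:ℝ) := by
  simpa using hasDerivAt_line hf a v 0

lemma contDiff_dz {nd : ℕ} {f : (Fin nd → ℝ) → ℝ} (hf : ContDiff ℝ 2 f) (v : Fin nd → ℝ) :
    ContDiff ℝ 1 (fun x => fderiv ℝ f x v) :=
  (ContinuousLinearMap.apply ℝ ℝ v).contDiff.comp (hf.fderiv_right (le_refl _))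

lemma avg_bound {ι : Type*} (B : Finset ι) (hB : B.Nonempty) (f : ι → ℝ) (G : ℝ)
    (h : ∀ i ∈ B, |f i| ≤ G) : |(B.card : ℝ)⁻¹ * ∑ i ∈ B, f i| ≤ G := by
  have hc : (0:ℝ) < (B.card : ℝ) := by exact_mod_cast Finset.card_pos.mpr hB
  have h1 : |∑ i ∈ B, f i| ≤ B.card * G := by
    calc |∑ i ∈ B, f i| ≤ ∑ i ∈ B, |f i| := Finset.abs_sum_le_sum_abs _ _
    _ ≤ ∑ _i ∈ B, G := Finset.sum_le_sum h
    _ = B.card * G := by simp [mul_comm]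
  rw [abs_mul, abs_inv, abs_of_pos hc, inv_mul_le_iff₀ hc]
  linarith

/-- If all partial derivatives of the logits are bounded by `G` and all second-order
partials by `M`, then every second-order partial derivative of `L_BE` is bounded in
absolute value by `2(M + G²)`. -/
theorem stmt6 {ι : Type*} {C nd : ℕ} [DecidableEq (Fin nd)] (B : Finset ι) (hB : B.Nonempty)
    (z : ι → Fin C → (Fin nd → ℝ) → ℝ) (yh : Fin C) (G M : ℝ)
    (hsmooth : ∀ i ∈ B, ∀ c, ContDiff ℝ 2 (z i c))
    (hgrad : ∀ i ∈ B, ∀ c (θ : Fin nd → ℝ) (k : Fin nd),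
      |deriv (fun t : ℝ => z i c (fun j => θ j + if j = k then t else 0)) 0| ≤ G)
    (hhess : ∀ i ∈ B, ∀ c (θ : Fin nd → ℝ) (k l : Fin nd),
      |deriv (fun s : ℝ => deriv (fun t : ℝ =>
        z i c (fun j => θ j + (if j = k then s else 0) + (if j = l then t else 0))) 0) 0| ≤ M) :
    ∀ (θ : Fin nd → ℝ) (k l : Fin nd),
      |deriv (fun s : ℝ => deriv (fun t : ℝ =>
        LBE B z yh (fun j => θ j + (if j = k then s else 0) + (if j = l then t else 0))) 0) 0|
        ≤ 2 * (M + G ^ 2) := by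
  intro θ k l
  have hCne : Nonempty (Fin C) := ⟨yh⟩
  -- direction vectors
  set E : Fin nd → (Fin nd → ℝ) := fun m j => if j = m then (1:ℝ) else 0 with hE
  have hpath : ∀ (x : Fin nd → ℝ) (m : Fin nd) (t : ℝ),
      (fun j => x j + if j = m then t else 0) = x + t • E m := by
    intro x m t; funext j; by_cases h : j = m <;> simp [hE, h]
  have hpath2 : ∀ (s t : ℝ),
      (fun j => θ j + (if j = k then s else 0) + (if j = l then t else 0))
        = (θ + s • E k) + t • E l := by
    intro s t; funext j; by_cases h1 : j = k <;> by_cases h2 : j = l <;>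
      simp [hE, h1, h2, Pi.add_apply, Pi.smul_apply]
  -- basic objects
  set u : Fin C → (Fin nd → ℝ) → ℝ := fun c x => (B.card : ℝ)⁻¹ * ∑ i ∈ B, z i c x with hu
  set Du : Fin C → (Fin nd → ℝ) → (Fin nd → ℝ) → ℝ :=
    fun c v x => (B.card : ℝ)⁻¹ * ∑ i ∈ B, fderiv ℝ (z i c) x v with hDu
  set S : (Fin nd → ℝ) → ℝ := fun x => ∑ j, Real.exp (u j x) with hS
  set p : Fin C → (Fin nd → ℝ) → ℝ := fun c x => Real.exp (u c x) / S x with hp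
  have hSpos : ∀ x, 0 < S x := by
    intro x
    exact Finset.sum_pos (fun j _ => Real.exp_pos _) ⟨yh, Finset.mem_univ _⟩
  have hpsum : ∀ x, ∑ j, p j x = 1 := by
    intro x
    rw [hp]
    rw [← Finset.sum_div]
    exact div_self (hSpos x).ne'
  have hppos : ∀ c x, 0 ≤ p c x := fun c x =>
    le_of_lt (div_pos (Real.exp_pos _) (hSpos x))
  -- LBE rewrite
  have hLBE : ∀ x, LBE B z yh x = Real.log (S x) - u yh x := by
    intro x
    rw [LBE, softmax]
    rw [Real.log_div (Real.exp_ne_zero _) (hSpos x).ne']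
    rw [Real.log_exp]
    ring_nf
    simp only [hu]; ring
  -- differentiability of logits
  have hzdiff : ∀ i ∈ B, ∀ c, Differentiable ℝ (z i c) := fun i hi c =>
    (hsmooth i hi c).differentiable (by norm_num)
  have hdzdiff : ∀ i ∈ B, ∀ c, Differentiable ℝ (fun x => fderiv ℝ (z i c) x (E l)) :=
    fun i hi c => (contDiff_dz (hsmooth i hi c) (E l)).differentiable (by norm_num)
  -- gradient bounds
  have hgradE : ∀ i ∈ B, ∀ c x (m : Fin nd), |fderiv ℝ (z i c) x (E m)| ≤ G := by
    intro i hi c x m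
    have := hgrad i hi c x m
    rw [show (fun t : ℝ => z i c (fun j => x j + if j = m then t else 0))
        = (fun t : ℝ => z i c (x + t • E m)) from funext fun t => by rw [hpath]] at this
    rwa [(hasDerivAt_line0 (hzdiff i hi c) x (E m)).deriv] at this
  -- hessian bounds
  have hhessE : ∀ i ∈ B, ∀ c x,
      |fderiv ℝ (fun y => fderiv ℝ (z i c) y (E l)) x (E k)| ≤ M := by
    intro i hi c x
    have h0 := hhess i hi c x k l
    have hin : ∀ s : ℝ, (deriv (fun t : ℝ =>
        z i c (fun j => x j + (if j = k then s else 0) + (if j = l then t else 0))) 0)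
        = fderiv ℝ (z i c) (x + s • E k) (E l) := by
      intro s
      rw [show (fun t : ℝ => z i c (fun j => x j + (if j = k then s else 0) + (if j = l then t else 0)))
          = fun t : ℝ => z i c ((x + s • E k) + t • E l) from funext fun t => by
            rw [show (fun j => x j + (if j = k then s else 0) + (if j = l then t else 0))
              = (x + s • E k) + t • E l from by
                funext j; by_cases h1 : j = k <;> by_cases h2 : j = l <;>
                  simp [hE, h1, h2]]]
      exact (hasDerivAt_line0 (hzdiff i hi c) _ (E l)).deriv
    rw [funext hin] at h0
    rwa [(hasDerivAt_line0 (hdzdiff i hi c) x (E k)).deriv] at h0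
  -- derivative of u along a line
  have huDeriv : ∀ c (v x : Fin nd → ℝ),
      HasDerivAt (fun t => u c (x + t • v)) (Du c v x) (0:ℝ) := by
    intro c v x
    simp only [hu, hDu]
    exact (HasDerivAt.fun_sum fun i hi => hasDerivAt_line0 (hzdiff i hi c) x v).const_mul _
  have hSDeriv : ∀ (v x : Fin nd → ℝ),
      HasDerivAt (fun t => S (x + t • v)) (∑ j, Real.exp (u j x) * Du j v x) (0:ℝ) := by
    intro v x
    simp only [hS]
    exact HasDerivAt.fun_sum fun j _ => by simpa using (huDeriv j v x).exp
  have hgDeriv : ∀ (v x : Fin nd → ℝ),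
      HasDerivAt (fun t => LBE B z yh (x + t • v))
        (∑ j, p j x * Du j v x - Du yh v x) (0:ℝ) := by
    intro v x
    rw [show (fun t => LBE B z yh (x + t • v))
        = fun t => Real.log (S (x + t • v)) - u yh (x + t • v) from
      funext fun t => hLBE _]
    have h1 := ((hSDeriv v x).log (by simpa using (hSpos x).ne')).sub (huDeriv yh v x)
    simp only [zero_smul, add_zero] at h1
    have h2 : (∑ j, Real.exp (u j x) * Du j v x) / S x = ∑ j, p j x * Du j v x := by
      rw [Finset.sum_div]
      exact Finset.sum_congr rfl fun j _ => by rw [hp]; rw [div_mul_eq_mul_div]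
    rwa [h2] at h1
  -- second-order objects
  set D2 : Fin C → ℝ := fun c =>
    (B.card : ℝ)⁻¹ * ∑ i ∈ B, fderiv ℝ (fun y => fderiv ℝ (z i c) y (E l)) θ (E k) with hD2
  have hD2bound : ∀ c, |D2 c| ≤ M := fun c =>
    avg_bound B hB _ M (fun i hi => hhessE i hi c θ)
  have hDuDeriv : ∀ c, HasDerivAt (fun s => Du c (E l) (θ + s • E k)) (D2 c) (0:ℝ) := by
    intro c
    simp only [hDu, hD2]
    exact (HasDerivAt.fun_sum fun i hi => hasDerivAt_line0 (hdzdiff i hi c) θ (E k)).const_mul _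
  set P' : Fin C → ℝ := fun c =>
    (Real.exp (u c θ) * Du c (E k) θ * S θ -
      Real.exp (u c θ) * ∑ j, Real.exp (u j θ) * Du j (E k) θ) / S θ ^ 2 with hP'
  have hpDeriv : ∀ c, HasDerivAt (fun s => p c (θ + s • E k)) (P' c) (0:ℝ) := by
    intro c
    simp only [hp, hP']
    have := ((huDeriv c (E k) θ).exp).fun_div (hSDeriv (E k) θ) (by simpa using (hSpos θ).ne')
    simpa using this
  have hmain : HasDerivAt
      (fun s => ∑ j, p j (θ + s • E k) * Du j (E l) (θ + s • E k) - Du yh (E l) (θ + s • E k))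
      ((∑ j, (P' j * Du j (E l) θ + p j θ * D2 j)) - D2 yh) (0:ℝ) := by
    refine HasDerivAt.sub ?_ (hDuDeriv yh)
    refine HasDerivAt.fun_sum fun j _ => ?_
    have := (hpDeriv j).fun_mul (hDuDeriv j)
    simpa using this
  -- rewrite the target
  have htarget : (fun s : ℝ => deriv (fun t : ℝ =>
      LBE B z yh (fun j => θ j + (if j = k then s else 0) + (if j = l then t else 0))) 0)
      = fun s => ∑ j, p j (θ + s • E k) * Du j (E l) (θ + s • E k)
          - Du yh (E l) (θ + s • E k) := by
    funext s
    rw [show (fun t : ℝ =>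
        LBE B z yh (fun j => θ j + (if j = k then s else 0) + (if j = l then t else 0)))
        = fun t => LBE B z yh ((θ + s • E k) + t • E l) from
      funext fun t => by rw [hpath2]]
    exact (hgDeriv (E l) (θ + s • E k)).deriv
  rw [htarget, hmain.deriv]
  -- final bound
  set q : ℝ := ∑ b, p b θ * Du b (E k) θ with hq
  have hGb : ∀ c (m : Fin nd), |Du c (E m) θ| ≤ G := fun c m =>
    avg_bound B hB _ G (fun i hi => hgradE i hi c θ m)
  have hG0 : 0 ≤ G := le_trans (abs_nonneg _) (hGb yh k)
  have hM0 : 0 ≤ M := le_trans (abs_nonneg _) (hD2bound yh)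
  have hqS : q * S θ = ∑ j, Real.exp (u j θ) * Du j (E k) θ := by
    rw [hq, Finset.sum_mul]
    refine Finset.sum_congr rfl fun j _ => ?_
    rw [hp, div_mul_eq_mul_div, div_mul_eq_mul_div, mul_div_assoc,
      div_self (hSpos θ).ne', mul_one]
  have hP'eq : ∀ j, P' j = p j θ * (Du j (E k) θ - q) := by
    intro j
    simp only [hP', hp]
    rw [← hqS, div_mul_eq_mul_div]
    rw [show Real.exp (u j θ) * Du j (E k) θ * S θ - Real.exp (u j θ) * (q * S θ)
        = (Real.exp (u j θ) * (Du j (E k) θ - q)) * S θ from by ring]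
    rw [sq, mul_div_mul_right _ _ (hSpos θ).ne']
  have hqb : |q| ≤ G := by
    have h1 : |q| ≤ ∑ b, p b θ * G := by
      rw [hq]
      refine le_trans (Finset.abs_sum_le_sum_abs _ _) (Finset.sum_le_sum fun b _ => ?_)
      rw [abs_mul, abs_of_nonneg (hppos b θ)]
      exact mul_le_mul_of_nonneg_left (hGb b k) (hppos b θ)
    rwa [← Finset.sum_mul, hpsum, one_mul] at h1
  have hterm : ∀ j : Fin C,
      |P' j * Du j (E l) θ + p j θ * D2 j| ≤ p j θ * (2*G*G + M) := by
    intro j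
    rw [hP'eq j]
    rw [show p j θ * (Du j (E k) θ - q) * Du j (E l) θ + p j θ * D2 j
        = p j θ * ((Du j (E k) θ - q) * Du j (E l) θ + D2 j) from by ring]
    rw [abs_mul, abs_of_nonneg (hppos j θ)]
    refine mul_le_mul_of_nonneg_left ?_ (hppos j θ)
    calc |(Du j (E k) θ - q) * Du j (E l) θ + D2 j|
        ≤ |(Du j (E k) θ - q) * Du j (E l) θ| + |D2 j| := abs_add_le _ _
      _ ≤ 2*G*G + M := by
        refine add_le_add ?_ (hD2bound j)
        rw [abs_mul]
        have hdq : |Du j (E k) θ - q| ≤ 2 * G := by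
          calc |Du j (E k) θ - q| ≤ |Du j (E k) θ| + |q| := abs_sub _ _
            _ ≤ 2 * G := by linarith [hGb j k, hqb]
        exact mul_le_mul hdq (hGb j l) (abs_nonneg _) (by linarith)
  calc |(∑ j, (P' j * Du j (E l) θ + p j θ * D2 j)) - D2 yh|
      ≤ |∑ j, (P' j * Du j (E l) θ + p j θ * D2 j)| + |D2 yh| := abs_sub _ _
    _ ≤ (∑ j, p j θ * (2*G*G + M)) + M :=
        add_le_add (le_trans (Finset.abs_sum_le_sum_abs _ _)
          (Finset.sum_le_sum fun j _ => hterm j)) (hD2bound yh)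
    _ = 2*G*G + M + M := by rw [← Finset.sum_mul, hpsum, one_mul]
    _ ≤ 2 * (M + G^2) := by nlinarith
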